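/- Let A be a ℤ-graded associative unital K-algebra with degree-zero component A₀, let s ∈ A₀ be an element commuting with every element of A₀, and let φ : K[X] → A be the K-algebra homomorphism with φ(X) = s. Let I be a homogeneous (graded) left ideal of A with φ⁻¹(I) ≠ 0, and let q ∈ K[X]. Then φ⁻¹(I + A·φ(q)) = φ⁻¹(I) + K[X]·q, i.e. the preimage under φ of the left ideal generated by I and φ(q) equals the ideal of K[X] generated by φ⁻¹(I) and q. -/
import Mathlib


open Polynomial

lemma aux_aeval_mem_zero {K A : Type*} [Field K] [Ring A] [Algebra K A]
    (𝒜 : ℤ → Submodule K A) [GradedRing 𝒜]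
    (s : A) (hs : s ∈ 𝒜 0) (p : K[X]) : Polynomial.aeval s p ∈ 𝒜 0 := by
  induction p using Polynomial.induction_on with
  | C a =>
      rw [Polynomial.aeval_C, Algebra.algebraMap_eq_smul_one]
      exact (𝒜 0).smul_mem a SetLike.GradedOne.one_mem
  | add p q hp hq => rw [map_add]; exact add_mem hp hq
  | monomial n a h =>
      have e : (Polynomial.C a * X ^ (n + 1) : K[X]) = C a * X ^ n * X := by ring
      rw [e, map_mul, Polynomial.aeval_X]
      simpa using SetLike.mul_mem_graded h hs

lemma aux_aeval_comm {K A : Type*} [Field K] [Ring A] [Algebra K A]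
    (𝒜 : ℤ → Submodule K A) [GradedRing 𝒜]
    (s : A) (hs : s ∈ 𝒜 0) (hcomm : ∀ a ∈ 𝒜 0, s * a = a * s)
    (p : K[X]) : ∀ a ∈ 𝒜 0, Polynomial.aeval s p * a = a * Polynomial.aeval s p := by
  induction p using Polynomial.induction_on with
  | C c => intro a _; rw [Polynomial.aeval_C]; exact Algebra.commutes c a
  | add p q hp hq =>
      intro a ha
      rw [map_add, add_mul, mul_add, hp a ha, hq a ha]
  | monomial n c h =>
      intro a ha
      have e : (Polynomial.C c * X ^ (n + 1) : K[X]) = C c * X ^ n * X := by ring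
      rw [e, map_mul, Polynomial.aeval_X, mul_assoc, hcomm a ha, ← mul_assoc, h a ha,
        mul_assoc]

theorem graded_checkRoot_sum_intersection
    {K A : Type*} [Field K] [Ring A] [Algebra K A]
    (𝒜 : ℤ → Submodule K A) [GradedRing 𝒜]
    (s : A) (hs : s ∈ 𝒜 0) (hcomm : ∀ a ∈ 𝒜 0, s * a = a * s)
    (I : Ideal A) (hIhom : Ideal.IsHomogeneous 𝒜 I)
    (hI : Ideal.comap ((Polynomial.aeval s : K[X] →ₐ[K] A)) I ≠ ⊥)
    (q : K[X]) :
    Ideal.comap ((Polynomial.aeval s : K[X] →ₐ[K] A)) (I ⊔ Ideal.span {(Polynomial.aeval s : K[X] →ₐ[K] A) q}) =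
      Ideal.comap ((Polynomial.aeval s : K[X] →ₐ[K] A)) I ⊔ Ideal.span {q} := by
  set φ : K[X] →ₐ[K] A := Polynomial.aeval s
  set J : Ideal K[X] := Ideal.comap φ I with hJ
  -- generator of J
  obtain ⟨g₀, hg₀⟩ : ∃ g₀, J = Ideal.span {g₀} :=
    ⟨Submodule.IsPrincipal.generator J, (Ideal.span_singleton_generator J).symm⟩
  have hg₀ne : g₀ ≠ 0 := by
    intro h
    exact hI (by rw [hg₀, h, Ideal.span_singleton_eq_bot])
  -- generator of J ⊔ span {q}
  obtain ⟨d, hdspan⟩ : ∃ d, J ⊔ Ideal.span {q} = Ideal.span {d} :=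
    ⟨Submodule.IsPrincipal.generator _, (Ideal.span_singleton_generator _).symm⟩
  have hg₀J : g₀ ∈ J := by rw [hg₀]; exact Ideal.subset_span rfl
  have hdg : d ∣ g₀ := by
    rw [← Ideal.mem_span_singleton, ← hdspan]
    exact Ideal.mem_sup_left hg₀J
  have hdq : d ∣ q := by
    rw [← Ideal.mem_span_singleton, ← hdspan]
    exact Ideal.mem_sup_right (Ideal.subset_span rfl)
  obtain ⟨g', hg'⟩ := hdg
  obtain ⟨q', hq'⟩ := hdq
  have hg'ne : g' ≠ 0 := fun h => hg₀ne (by rw [hg', h, mul_zero])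
  apply le_antisymm
  · -- hard direction
    intro p hp
    rw [Ideal.mem_comap, Submodule.mem_sup] at hp
    obtain ⟨i, hi, z, hz, hiz⟩ := hp
    rw [Ideal.mem_span_singleton'] at hz
    obtain ⟨a, ha⟩ := hz
    -- take degree-0 components
    have hφp : φ p ∈ 𝒜 0 := aux_aeval_mem_zero 𝒜 s hs p
    have hφq : φ q ∈ 𝒜 0 := aux_aeval_mem_zero 𝒜 s hs q
    have hz0 : (DirectSum.decompose 𝒜 z 0 : A)
        = (DirectSum.decompose 𝒜 a 0 : A) * φ q := by
      have h2 := DirectSum.coe_mul_of_apply_add (A := fun i => 𝒜 i)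
        (DirectSum.decompose 𝒜 a) (⟨φ q, hφq⟩ : 𝒜 0) 0
      rw [← ha, DirectSum.decompose_mul, DirectSum.decompose_of_mem 𝒜 hφq]
      simpa using h2
    have h0 : φ p = (DirectSum.decompose 𝒜 i 0 : A) +
        (DirectSum.decompose 𝒜 a 0 : A) * φ q := by
      conv_lhs => rw [← DirectSum.decompose_of_mem_same 𝒜 hφp, ← hiz]
      rw [DirectSum.decompose_add, DirectSum.add_apply, Submodule.coe_add, hz0]
    set i₀ : A := (DirectSum.decompose 𝒜 i 0 : A)
    set a₀ : A := (DirectSum.decompose 𝒜 a 0 : A)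
    have hi₀ : i₀ ∈ I := hIhom 0 hi
    have ha₀ : a₀ ∈ 𝒜 0 := SetLike.coe_mem _
    have hg₀I : φ g₀ ∈ I := hg₀J
    have key : φ (g' * p) ∈ I := by
      rw [map_mul, h0, mul_add]
      apply Ideal.add_mem
      · exact Ideal.mul_mem_left I _ hi₀
      · have comm : φ g' * a₀ = a₀ * φ g' :=
          aux_aeval_comm 𝒜 s hs hcomm g' a₀ ha₀
        have e1 : φ g' * (a₀ * φ q) = a₀ * (φ q' * φ g₀) := by
          rw [← mul_assoc, comm, mul_assoc, ← map_mul, ← map_mul]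
          congr 2
          rw [hg', hq']; ring
        rw [e1, ← mul_assoc]
        exact Ideal.mul_mem_left I _ hg₀I
    -- downstairs: g₀ ∣ g' * p, so d ∣ p
    have hmem : g' * p ∈ J := key
    rw [hg₀, Ideal.mem_span_singleton] at hmem
    have hdvd : d ∣ p := by
      have h2 : g' * d ∣ g' * p := by
        rw [mul_comm g' d, ← hg']; exact hmem
      exact (mul_dvd_mul_iff_left hg'ne).mp h2
    rw [hdspan]
    exact Ideal.mem_span_singleton.mpr hdvd
  · -- easy direction
    apply sup_le
    · exact Ideal.comap_mono le_sup_left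
    · rw [Ideal.span_le]
      rintro x rfl
      rw [SetLike.mem_coe, Ideal.mem_comap]
      exact Ideal.mem_sup_right (Ideal.subset_span rfl)
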